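/- The map $\Phi \mapsto \int_E \varepsilon_x^- \Phi(x)\, N(dx)$, where $\varepsilon_x^- \Phi(x) := f(N\setminus\delta_x, x)$ for a representative $f$ of $\Phi$ and the integral is a pathwise Bochner integral, is a well-defined continuous linear operator from $L^1(\Omega\times E; H)$ to $L^1(\Omega;H)$ satisfying $\|\int_E \varepsilon_x^-\Phi(x)\,N(dx)\|_{L^1(\Omega;H)} \le \|\Phi\|_{L^1(\Omega\times E;H)}$ and the Hilbert-space-valued Mecke identity $\mathbb{E}[\int_E \varepsilon_x^-\Phi(x)\,N(dx)] = \mathbb{E}[\int_E \Phi(x)\,\mu(dx)]$. -/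

import Mathlib

open MeasureTheory Filter
open scoped ENNReal RealInnerProductSpace

-- Removal of a point mass: `η \ δ_x = η - δ_x` if `δ_x ≤ η`, and `η` otherwise.
open scoped Classical in
noncomputable def rmPt {E : Type*} [MeasurableSpace E] (η : Measure E) (x : E) : Measure E :=
  if Measure.dirac x ≤ η then η - Measure.dirac x else η

/-- **Mecke's formula** (remove-one form), characterizing Poisson random measures
with σ-finite intensity `μ`. -/
def MeckeSub {Ω E : Type*} [MeasurableSpace Ω] [MeasurableSpace E]
    (P : Measure Ω) (μ : Measure E) (N : Ω → Measure E) : Prop :=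
  ∀ f : Measure E → E → ℝ≥0∞, Measurable (Function.uncurry f) →
    ∫⁻ ω, ∫⁻ x, f (rmPt (N ω) x) x ∂(N ω) ∂P
      = ∫⁻ ω, ∫⁻ x, f (N ω) x ∂μ ∂P

/-! ### Auxiliary lemmas -/

section MeckeAux

open Set Topology

variable {α : Type*} [MeasurableSpace α] {μ' : Measure α}

/-- Squeeze lemma: if `u₁ + u₂ ≤ v` pointwise, `v` is measurable with finite integral,
and the sum of the lower Lebesgue integrals of `u₁, u₂` is at least that of `v`, then
`u₁` and `u₂` agree almost everywhere with measurable functions that sum a.e. to `v`. -/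
lemma mecke_pair_squeeze (u₁ u₂ v : α → ℝ≥0∞) (hv : Measurable v)
    (hle : ∀ x, u₁ x + u₂ x ≤ v x)
    (hge : ∫⁻ x, v x ∂μ' ≤ ∫⁻ x, u₁ x ∂μ' + ∫⁻ x, u₂ x ∂μ')
    (hfin : ∫⁻ x, v x ∂μ' ≠ ∞) :
    ∃ g₁ g₂ : α → ℝ≥0∞, Measurable g₁ ∧ Measurable g₂ ∧
      u₁ =ᵐ[μ'] g₁ ∧ u₂ =ᵐ[μ'] g₂ ∧ (fun x => g₁ x + g₂ x) =ᵐ[μ'] v := by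
  obtain ⟨g₁, hm₁, hle₁, heq₁⟩ := exists_measurable_le_lintegral_eq μ' u₁
  obtain ⟨g₂, hm₂, hle₂, heq₂⟩ := exists_measurable_le_lintegral_eq μ' u₂
  have hgu : ∀ x, g₁ x + g₂ x ≤ v x := fun x =>
    le_trans (add_le_add (hle₁ x) (hle₂ x)) (hle x)
  have hS : ∫⁻ x, g₁ x + g₂ x ∂μ' = ∫⁻ x, v x ∂μ' := by
    refine le_antisymm (lintegral_mono hgu) ?_
    calc ∫⁻ x, v x ∂μ' ≤ ∫⁻ x, u₁ x ∂μ' + ∫⁻ x, u₂ x ∂μ' := hge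
      _ = ∫⁻ x, g₁ x ∂μ' + ∫⁻ x, g₂ x ∂μ' := by rw [heq₁, heq₂]
      _ ≤ ∫⁻ x, g₁ x + g₂ x ∂μ' := le_lintegral_add _ _
  have hSfin : ∫⁻ x, g₁ x + g₂ x ∂μ' ≠ ∞ := hS ▸ hfin
  have hSv : (fun x => g₁ x + g₂ x) =ᵐ[μ'] v := by
    have hsub0 : ∫⁻ x, v x - (g₁ x + g₂ x) ∂μ' = 0 := by
      rw [lintegral_sub (g := fun x => g₁ x + g₂ x) (hm₁.add hm₂) hSfin (Filter.Eventually.of_forall hgu), hS, tsub_self]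
    have h0 := (lintegral_eq_zero_iff (hv.sub (hm₁.add hm₂))).1 hsub0
    filter_upwards [h0] with x hx
    exact le_antisymm (hgu x) (tsub_eq_zero_iff_le.1 hx)
  have hvfin : ∀ᵐ x ∂μ', v x < ∞ := ae_lt_top hv hfin
  refine ⟨g₁, g₂, hm₁, hm₂, ?_, ?_, hSv⟩
  · filter_upwards [hSv, hvfin] with x hx hfx
    have hu₂v : u₂ x ≤ v x := le_trans (self_le_add_left _ _) (hle x)
    have h2fin : g₂ x ≠ ∞ := ((hle₂ x).trans_lt (hu₂v.trans_lt hfx)).ne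
    have hub : u₁ x ≤ g₁ x := by
      have h1 : u₁ x ≤ v x - u₂ x :=
        ENNReal.le_sub_of_add_le_right (hu₂v.trans_lt hfx).ne (hle x)
      have h2 : v x - u₂ x ≤ v x - g₂ x := tsub_le_tsub_left (hle₂ x) _
      have h3 : v x - g₂ x = g₁ x := ENNReal.sub_eq_of_eq_add h2fin hx.symm
      exact h1.trans (h2.trans_eq h3)
    exact le_antisymm hub (hle₁ x)
  · filter_upwards [hSv, hvfin] with x hx hfx
    have hu₁v : u₁ x ≤ v x := le_trans (self_le_add_right _ _) (hle x)
    have h1fin : g₁ x ≠ ∞ := ((hle₁ x).trans_lt (hu₁v.trans_lt hfx)).ne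
    have hub : u₂ x ≤ g₂ x := by
      have h1 : u₂ x ≤ v x - u₁ x :=
        ENNReal.le_sub_of_add_le_left (hu₁v.trans_lt hfx).ne (hle x)
      have h2 : v x - u₁ x ≤ v x - g₁ x := tsub_le_tsub_left (hle₁ x) _
      have h3 : v x - g₁ x = g₂ x := ENNReal.sub_eq_of_eq_add_rev h1fin hx.symm
      exact h1.trans (h2.trans_eq h3)
    exact le_antisymm hub (hle₂ x)

lemma mecke_isup_min_cap (a b : ℝ≥0∞) (hb0 : b ≠ 0) :
    ⨆ c : ℕ, min a ((c : ℝ≥0∞) * b) = a := by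
  refine le_antisymm (iSup_le fun c => min_le_left _ _) ?_
  rcases eq_or_ne a ∞ with rfl | ha
  · have h1 : ⨆ c : ℕ, min (⊤ : ℝ≥0∞) ((c : ℝ≥0∞) * b) = ⨆ c : ℕ, (c : ℝ≥0∞) * b := by
      simp
    rw [h1, ← ENNReal.iSup_mul, ENNReal.iSup_natCast, ENNReal.top_mul hb0]
  · rcases eq_or_ne b ∞ with rfl | hb
    · refine le_trans ?_ (le_iSup (fun c : ℕ => min a ((c : ℝ≥0∞) * ⊤)) 1)
      simp [ENNReal.mul_top, ha]
    · obtain ⟨c, hc⟩ := ENNReal.exists_nat_gt (ENNReal.div_lt_top ha hb0).ne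
      have hac : a ≤ (c : ℝ≥0∞) * b := by
        have := mul_le_mul_left hc.le b
        rwa [ENNReal.div_mul_cancel hb0 hb] at this
      refine le_trans ?_ (le_iSup (fun c : ℕ => min a ((c : ℝ≥0∞) * b)) c)
      simp [hac]

/-- A strictly positive measurable weight with finite integral against a σ-finite measure. -/
lemma mecke_exists_weight {E : Type*} [MeasurableSpace E] (μ : Measure E) [SigmaFinite μ] :
    ∃ w : E → ℝ≥0∞, Measurable w ∧ (∀ x, w x ≠ 0) ∧ ∫⁻ x, w x ∂μ ≠ ∞ := by
  set S : ℕ → Set E := disjointed (spanningSets μ) with hS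
  have hSm : ∀ n, MeasurableSet (S n) :=
    MeasurableSet.disjointed (measurableSet_spanningSets μ)
  set a : ℕ → ℝ≥0∞ := fun n => (2 ^ n)⁻¹ * (1 + μ (spanningSets μ n))⁻¹ with ha
  have ha0 : ∀ n, a n ≠ 0 := by
    intro n
    apply mul_ne_zero
    · exact ENNReal.inv_ne_zero.2 (by exact ENNReal.pow_ne_top (by norm_num))
    · exact ENNReal.inv_ne_zero.2 (by
        exact ENNReal.add_ne_top.2 ⟨by norm_num, (measure_spanningSets_lt_top μ n).ne⟩)
  refine ⟨fun x => ∑' n, (S n).indicator (fun _ => a n) x,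
    Measurable.ennreal_tsum fun n => measurable_const.indicator (hSm n), ?_, ?_⟩
  · intro x
    have hx : x ∈ ⋃ n, S n := by
      rw [hS, iUnion_disjointed, iUnion_spanningSets]; trivial
    obtain ⟨n, hn⟩ := mem_iUnion.1 hx
    intro h0
    have h0' : ∑' m, (S m).indicator (fun _ => a m) x = 0 := h0
    have hle : (S n).indicator (fun _ => a n) x ≤ ∑' m, (S m).indicator (fun _ => a m) x :=
      ENNReal.le_tsum n
    rw [h0', indicator_of_mem hn] at hle
    exact ha0 n (le_antisymm hle zero_le)
  · have h1 : ∫⁻ x, ∑' n, (S n).indicator (fun _ => a n) x ∂μ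
        = ∑' n, a n * μ (S n) := by
      rw [lintegral_tsum fun n => (measurable_const.indicator (hSm n)).aemeasurable]
      congr 1; funext n
      rw [lintegral_indicator_const (hSm n)]
    have h2 : ∀ n, a n * μ (S n) ≤ (2 ^ n : ℝ≥0∞)⁻¹ := by
      intro n
      rw [ha, mul_assoc]
      refine mul_le_mul_right ?_ _ |>.trans (by rw [mul_one])
      have hsub : μ (S n) ≤ μ (spanningSets μ n) :=
        measure_mono (disjointed_subset _ n)
      calc (1 + μ (spanningSets μ n))⁻¹ * μ (S n)
          ≤ (1 + μ (spanningSets μ n))⁻¹ * (1 + μ (spanningSets μ n)) :=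
            mul_le_mul_right (hsub.trans (self_le_add_left _ _)) _
        _ = 1 := ENNReal.inv_mul_cancel (by simp)
            (ENNReal.add_ne_top.2 ⟨by norm_num, (measure_spanningSets_lt_top μ n).ne⟩)
    rw [h1]
    have h3 : ∑' n, a n * μ (S n) ≤ ∑' n : ℕ, ((2 : ℝ≥0∞))⁻¹ ^ n := by
      refine ENNReal.tsum_le_tsum fun n => (h2 n).trans_eq ?_
      rw [← ENNReal.inv_pow]
    refine ne_top_of_le_ne_top ?_ h3
    rw [ENNReal.tsum_geometric]
    simp

variable {H : Type*} [NormedAddCommGroup H] [InnerProductSpace ℝ H]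

lemma mecke_enorm_eq_iSup_inner {v : ℕ → H} (hv : DenseRange v) (a : H) :
    (‖a‖₊ : ℝ≥0∞) = ⨆ k, ENNReal.ofReal (⟪v k, a⟫ / ‖v k‖) := by
  refine le_antisymm ?_ (iSup_le fun k => ?_)
  · rcases eq_or_ne a 0 with rfl | ha
    · simp
    obtain ⟨u, hu_mem, hu_lim⟩ := mem_closure_iff_seq_limit.1 (hv a)
    have hna : ‖a‖ ≠ 0 := by simpa using ha
    have hinner : Tendsto (fun n => ⟪u n, a⟫) atTop (𝓝 ⟪a, a⟫) :=
      hu_lim.inner tendsto_const_nhds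
    have hnorm : Tendsto (fun n => ‖u n‖) atTop (𝓝 ‖a‖) := hu_lim.norm
    have hdiv : Tendsto (fun n => ⟪u n, a⟫ / ‖u n‖) atTop (𝓝 (⟪a, a⟫ / ‖a‖)) :=
      hinner.div hnorm hna
    have hval : ⟪a, a⟫ / ‖a‖ = ‖a‖ := by
      rw [real_inner_self_eq_norm_mul_norm]
      field_simp
    have hlim2 : Tendsto (fun n => ENNReal.ofReal (⟪u n, a⟫ / ‖u n‖)) atTop
        (𝓝 ((‖a‖₊ : ℝ≥0∞))) := by
      rw [← enorm_eq_nnnorm, ← ofReal_norm, ← hval]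
      exact (ENNReal.continuous_ofReal.tendsto _).comp hdiv
    refine le_of_tendsto hlim2 (Eventually.of_forall fun n => ?_)
    obtain ⟨k, hk⟩ := hu_mem n
    rw [← hk]
    exact le_iSup (fun k => ENNReal.ofReal (⟪v k, a⟫ / ‖v k‖)) k
  · rcases eq_or_ne (v k) 0 with h0 | h0
    · simp [h0, inner_zero_left]
    have hle : ⟪v k, a⟫ / ‖v k‖ ≤ ‖a‖ := by
      rw [div_le_iff₀ (norm_pos_iff.mpr h0)]
      calc ⟪v k, a⟫ ≤ ‖v k‖ * ‖a‖ := real_inner_le_norm _ _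
        _ = ‖a‖ * ‖v k‖ := mul_comm _ _
    calc ENNReal.ofReal (⟪v k, a⟫ / ‖v k‖) ≤ ENNReal.ofReal ‖a‖ :=
          ENNReal.ofReal_le_ofReal hle
      _ = (‖a‖₊ : ℝ≥0∞) := (ofReal_norm a).trans (enorm_eq_nnnorm a)

open Classical in
lemma mecke_aesm_of_enorm_dist [TopologicalSpace.SeparableSpace H]
    {v : ℕ → H} (hv : DenseRange v) {F : α → H} {ν : Measure α}
    (h : ∀ k : ℕ, AEMeasurable (fun x => (‖F x - v k‖₊ : ℝ≥0∞)) ν) :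
    AEStronglyMeasurable F ν := by
  borelize H
  have hall : ∀ᵐ x ∂ν, ∀ k, (‖F x - v k‖₊ : ℝ≥0∞) = (h k).mk _ x :=
    ae_all_iff.2 fun k => (h k).ae_eq_mk
  set B : Set α := {x | ¬ ∀ k, (‖F x - v k‖₊ : ℝ≥0∞) = (h k).mk _ x} with hB
  have hBnull : ν B = 0 := by
    rw [ae_iff] at hall; exact hall
  set T : Set α := (toMeasurable ν B)ᶜ with hT
  have hTm : MeasurableSet T := (measurableSet_toMeasurable ν B).compl
  have hTcon : ν Tᶜ = 0 := by
    rw [hT, compl_compl, measure_toMeasurable]; exact hBnull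
  have hTP : ∀ x ∈ T, ∀ k, (‖F x - v k‖₊ : ℝ≥0∞) = (h k).mk _ x := by
    intro x hx
    by_contra hc
    exact hx (subset_toMeasurable ν B hc)
  have hex : ∀ n : ℕ, ∀ x : α, ∃ k : ℕ,
      x ∈ T → (h k).mk _ x < ENNReal.ofReal (1 / (n + 1)) := by
    intro n x
    by_cases hx : x ∈ T
    · obtain ⟨k, hk⟩ := hv.exists_dist_lt (F x) (by positivity : (0:ℝ) < 1 / (n+1))
      refine ⟨k, fun hxT => ?_⟩
      rw [← hTP x hxT k, ← enorm_eq_nnnorm, ← ofReal_norm]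
      exact ENNReal.ofReal_lt_ofReal_iff (by positivity) |>.2
        (by rw [← dist_eq_norm]; exact hk)
    · exact ⟨0, fun hxT => absurd hxT hx⟩
  have hpm : ∀ n k : ℕ,
      MeasurableSet {x | x ∈ T → (h k).mk _ x < ENNReal.ofReal (1 / (n + 1))} := by
    intro n k
    have : {x | x ∈ T → (h k).mk _ x < ENNReal.ofReal (1 / (n + 1))}
        = Tᶜ ∪ {x | (h k).mk _ x < ENNReal.ofReal (1 / (n + 1))} := by
      ext x; by_cases hx : x ∈ T <;> simp [hx]
    rw [this]
    exact hTm.compl.union (measurableSet_lt ((h k).measurable_mk) measurable_const)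
  set G : ℕ → α → H := fun n x => v (Nat.find (hex n x)) with hG
  haveI : SecondCountableTopology H := UniformSpace.secondCountable_of_separable H
  have hGm : ∀ n, AEStronglyMeasurable (G n) ν := fun n =>
    ((measurable_from_top.comp (measurable_find _ (hpm n))).stronglyMeasurable).aestronglyMeasurable
  have haeT : ∀ᵐ x ∂ν, x ∈ T := by
    rw [ae_iff]; exact hTcon
  refine aestronglyMeasurable_of_tendsto_ae atTop hGm ?_
  filter_upwards [haeT] with x hx
  rw [tendsto_iff_dist_tendsto_zero]
  have hbd : ∀ n, dist (G n x) (F x) ≤ 1 / ((n : ℝ) + 1) := by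
    intro n
    have hspec := Nat.find_spec (hex n x) hx
    rw [← hTP x hx _, ← enorm_eq_nnnorm, ← ofReal_norm] at hspec
    have hlt : ‖F x - v (Nat.find (hex n x))‖ < 1 / ((n : ℝ) + 1) :=
      (ENNReal.ofReal_lt_ofReal_iff (by positivity)).1 hspec
    have hd : dist (G n x) (F x) = ‖F x - v (Nat.find (hex n x))‖ := by
      rw [dist_comm, dist_eq_norm]
    rw [hd]
    exact hlt.le
  exact squeeze_zero (fun n => dist_nonneg) hbd tendsto_one_div_add_atTop_nhds_zero_nat

lemma mecke_aesm_of_inner [TopologicalSpace.SeparableSpace H]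
    {v : ℕ → H} (hv : DenseRange v) {F : α → H} {ν : Measure α}
    (h : ∀ k : ℕ, AEMeasurable (fun x => ⟪v k, F x⟫) ν) :
    AEStronglyMeasurable F ν := by
  refine mecke_aesm_of_enorm_dist hv fun j => ?_
  have hrep : ∀ x, (‖F x - v j‖₊ : ℝ≥0∞)
      = ⨆ k, ENNReal.ofReal ((⟪v k, F x⟫ - ⟪v k, v j⟫) / ‖v k‖) := by
    intro x
    rw [mecke_enorm_eq_iSup_inner hv (F x - v j)]
    congr 1; funext k; rw [inner_sub_right]
  have hm : ∀ k : ℕ, AEMeasurable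
      (fun x => ENNReal.ofReal ((⟪v k, F x⟫ - ⟪v k, v j⟫) / ‖v k‖)) ν := fun k =>
    ENNReal.measurable_ofReal.comp_aemeasurable
      (((h k).sub aemeasurable_const).div aemeasurable_const)
  have hsupm : AEMeasurable
      (fun x => ⨆ k, ENNReal.ofReal ((⟪v k, F x⟫ - ⟪v k, v j⟫) / ‖v k‖)) ν :=
    AEMeasurable.iSup hm
  exact hsupm.congr (Filter.Eventually.of_forall fun x => (hrep x).symm)

lemma mecke_eq_of_inner_dense {v : ℕ → H} (hv : DenseRange v) {a b : H}
    (h : ∀ k, ⟪v k, a⟫ = ⟪v k, b⟫) : a = b := by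
  have hfun : (fun u : H => ⟪u, a⟫) = fun u : H => ⟪u, b⟫ :=
    hv.equalizer (continuous_id.inner continuous_const)
      (continuous_id.inner continuous_const) (funext fun k => h k)
  exact ext_inner_left ℝ fun u => congrFun hfun u

end MeckeAux

/-! ### The key squeeze lemmas derived from the Mecke identity -/

section MeckeKey

variable {Ω E : Type*} [MeasurableSpace Ω] [MeasurableSpace E]
variable {P : Measure Ω} [IsProbabilityMeasure P] {μ : Measure E} [SigmaFinite μ]
variable {N : Ω → Measure E}

lemma mecke_keyCapped (hMecke : MeckeSub P μ N) (hN : Measurable N)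
    {w : E → ℝ≥0∞} (hw : Measurable w) (hwfin : ∫⁻ x, w x ∂μ ≠ ∞)
    (t : Measure E → E → ℝ≥0∞) (ht : Measurable (Function.uncurry t))
    (c : ℝ≥0∞) (hc : c ≠ ∞) (hle : ∀ η x, t η x ≤ c * w x) :
    (∃ G : Ω → ℝ≥0∞, Measurable G ∧
        (fun ω => ∫⁻ x, t (rmPt (N ω) x) x ∂(N ω)) =ᵐ[P] G) ∧
    (∀ᵐ ω ∂P, AEMeasurable (fun x => t (rmPt (N ω) x) x) (N ω)) := by
  set t' : Measure E → E → ℝ≥0∞ := fun η x => c * w x - t η x with ht'def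
  have ht' : Measurable (Function.uncurry t') :=
    ((hw.comp measurable_snd).const_mul c).sub ht
  have hsum : ∀ η x, t η x + t' η x = c * w x := fun η x =>
    add_tsub_cancel_of_le (hle η x)
  set p : Ω → ℝ≥0∞ := fun ω => ∫⁻ x, t (rmPt (N ω) x) x ∂(N ω) with hpdef
  set q : Ω → ℝ≥0∞ := fun ω => ∫⁻ x, t' (rmPt (N ω) x) x ∂(N ω) with hqdef
  set TOT : Ω → ℝ≥0∞ := fun ω => c * ∫⁻ x, w x ∂(N ω) with hTOTdef
  have hTOTm : Measurable TOT :=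
    ((Measure.measurable_lintegral hw).comp hN).const_mul c
  have hTOTω : ∀ ω, ∫⁻ x, c * w x ∂(N ω) = TOT ω := fun ω => lintegral_const_mul c hw
  have hPQ : ∀ ω, p ω + q ω ≤ TOT ω := by
    intro ω
    calc p ω + q ω ≤ ∫⁻ x, t (rmPt (N ω) x) x + t' (rmPt (N ω) x) x ∂(N ω) :=
          le_lintegral_add _ _
      _ = ∫⁻ x, c * w x ∂(N ω) := lintegral_congr fun x => hsum _ _
      _ = TOT ω := hTOTω ω
  have Mp : ∫⁻ ω, p ω ∂P = ∫⁻ ω, ∫⁻ x, t (N ω) x ∂μ ∂P := hMecke t ht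
  have Mq : ∫⁻ ω, q ω ∂P = ∫⁻ ω, ∫⁻ x, t' (N ω) x ∂μ ∂P := hMecke t' ht'
  have hwP : ∫⁻ ω, ∫⁻ x, w x ∂(N ω) ∂P = ∫⁻ x, w x ∂μ := by
    have := hMecke (fun _ x => w x) (hw.comp measurable_snd)
    simpa [lintegral_const, measure_univ] using this
  have hTOTint : ∫⁻ ω, TOT ω ∂P = c * ∫⁻ x, w x ∂μ := by
    have h' : ∫⁻ ω, TOT ω ∂P = c * ∫⁻ ω, ∫⁻ x, w x ∂(N ω) ∂P :=
      lintegral_const_mul c ((Measure.measurable_lintegral hw).comp hN)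
    rw [h', hwP]
  have hTOTfin : ∫⁻ ω, TOT ω ∂P ≠ ∞ := by
    rw [hTOTint]; exact ENNReal.mul_ne_top hc hwfin
  have hAm : Measurable fun ω => ∫⁻ x, t (N ω) x ∂μ :=
    (Measurable.lintegral_prod_right ht).comp hN
  have hΛsum : (∫⁻ ω, ∫⁻ x, t (N ω) x ∂μ ∂P) + (∫⁻ ω, ∫⁻ x, t' (N ω) x ∂μ ∂P)
      = c * ∫⁻ x, w x ∂μ := by
    have hin : ∀ ω, (∫⁻ x, t (N ω) x ∂μ) + (∫⁻ x, t' (N ω) x ∂μ) = c * ∫⁻ x, w x ∂μ := by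
      intro ω
      have htm : Measurable fun x => t (N ω) x :=
        ht.comp (measurable_const.prodMk measurable_id)
      rw [← lintegral_add_left htm]
      rw [lintegral_congr fun x => hsum (N ω) x, lintegral_const_mul c hw]
    rw [← lintegral_add_left hAm]
    simp only [hin]
    simp [lintegral_const, measure_univ]
  have hge : ∫⁻ ω, TOT ω ∂P ≤ ∫⁻ ω, p ω ∂P + ∫⁻ ω, q ω ∂P := by
    rw [Mp, Mq, hΛsum, hTOTint]
  obtain ⟨G₁, G₂, hG₁m, hG₂m, hpG, hqG, hGT⟩ :=
    mecke_pair_squeeze p q TOT hTOTm hPQ hge hTOTfin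
  constructor
  · exact ⟨G₁, hG₁m, hpG⟩
  · have hae : ∀ᵐ ω ∂P, p ω + q ω = TOT ω ∧ TOT ω < ∞ := by
      filter_upwards [hpG, hqG, hGT, ae_lt_top hTOTm hTOTfin] with ω h1 h2 h3 h4
      exact ⟨by rw [h1, h2, h3], h4⟩
    filter_upwards [hae] with ω hω
    obtain ⟨hsumω, hfinω⟩ := hω
    have hgeω : ∫⁻ x, c * w x ∂(N ω)
        ≤ (∫⁻ x, t (rmPt (N ω) x) x ∂(N ω)) + ∫⁻ x, t' (rmPt (N ω) x) x ∂(N ω) := by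
      rw [hTOTω ω, ← hsumω]
    have hfinω' : ∫⁻ x, c * w x ∂(N ω) ≠ ∞ := by
      rw [hTOTω ω]; exact hfinω.ne
    obtain ⟨g₁, g₂, hg₁m, hg₂m, hu₁, hu₂, hg⟩ :=
      mecke_pair_squeeze (μ' := N ω) (fun x => t (rmPt (N ω) x) x)
        (fun x => t' (rmPt (N ω) x) x) (fun x => c * w x)
        (hw.const_mul c) (fun x => (hsum _ _).le) hgeω hfinω'
    exact ⟨g₁, hg₁m, hu₁⟩

lemma mecke_keyFull (hMecke : MeckeSub P μ N) (hN : Measurable N)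
    {w : E → ℝ≥0∞} (hw : Measurable w) (hw0 : ∀ x, w x ≠ 0) (hwfin : ∫⁻ x, w x ∂μ ≠ ∞)
    (t : Measure E → E → ℝ≥0∞) (ht : Measurable (Function.uncurry t)) :
    (∃ G : Ω → ℝ≥0∞, Measurable G ∧
        (fun ω => ∫⁻ x, t (rmPt (N ω) x) x ∂(N ω)) =ᵐ[P] G) ∧
    (∀ᵐ ω ∂P, AEMeasurable (fun x => t (rmPt (N ω) x) x) (N ω)) := by
  set tc : ℕ → Measure E → E → ℝ≥0∞ := fun c η x => min (t η x) ((c : ℝ≥0∞) * w x) with htc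
  have htcm : ∀ c : ℕ, Measurable (Function.uncurry (tc c)) := fun c =>
    ht.min ((hw.comp measurable_snd).const_mul _)
  have hkey := fun c : ℕ => mecke_keyCapped hMecke hN hw hwfin (tc c) (htcm c) (c : ℝ≥0∞)
    (by simp) (fun η x => min_le_right _ _)
  have hsup : ∀ η x, (⨆ c : ℕ, tc c η x) = t η x := fun η x =>
    mecke_isup_min_cap (t η x) (w x) (hw0 x)
  have hmono : ∀ η x, Monotone fun c : ℕ => tc c η x := fun η x c₁ c₂ hc =>
    min_le_min le_rfl (mul_le_mul_left (by exact_mod_cast hc) _)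
  choose G hG using fun c : ℕ => (hkey c).1
  have haemeas : ∀ᵐ ω ∂P, ∀ c : ℕ, AEMeasurable (fun x => tc c (rmPt (N ω) x) x) (N ω) :=
    ae_all_iff.2 fun c => (hkey c).2
  have key_ae : ∀ᵐ ω ∂P, (∀ c : ℕ, ∫⁻ x, tc c (rmPt (N ω) x) x ∂(N ω) = G c ω)
      ∧ ∀ c : ℕ, AEMeasurable (fun x => tc c (rmPt (N ω) x) x) (N ω) := by
    filter_upwards [ae_all_iff.2 fun c => (hG c).2, haemeas] with ω h1 h2 using ⟨h1, h2⟩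
  constructor
  · refine ⟨fun ω => ⨆ c, G c ω, Measurable.iSup fun c => (hG c).1, ?_⟩
    filter_upwards [key_ae] with ω hω
    obtain ⟨h1, h2⟩ := hω
    have hstep : ∫⁻ x, t (rmPt (N ω) x) x ∂(N ω)
        = ⨆ c, ∫⁻ x, tc c (rmPt (N ω) x) x ∂(N ω) := by
      rw [← lintegral_iSup' h2 (Filter.Eventually.of_forall fun x c₁ c₂ hc => hmono _ _ hc)]
      exact lintegral_congr fun x => (hsup _ _).symm
    rw [hstep]
    exact iSup_congr h1
  · filter_upwards [key_ae] with ω hω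
    obtain ⟨h1, h2⟩ := hω
    have := AEMeasurable.iSup (μ := N ω) h2
    exact this.congr (Filter.Eventually.of_forall fun x => hsup _ _)

end MeckeKey

/-- **`H`-valued Mecke formula.**  For `Φ ∈ L¹(Ω × E; H)` with representative `f`
(so `Φ (ω, x) = f (N ω) x`), the pathwise Bochner integral
`∫_E ε⁻_x Φ(x) N(dx) = ∫_E f (N \ δ_x) x N(dx)` is `P`-a.s. defined, the map
`Φ ↦ ∫_E ε⁻_x Φ(x) N(dx)` is a contraction from `L¹(Ω × E;H)` to `L¹(Ω;H)`
(hence well-defined and continuous: it does not depend on the representative),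
and `𝔼[∫_E ε⁻_x Φ(x) N(dx)] = 𝔼[∫_E Φ(x) μ(dx)]`. -/
theorem H_valued_Mecke
    {Ω E H : Type*} [MeasurableSpace Ω] [MeasurableSpace E]
    [NormedAddCommGroup H] [InnerProductSpace ℝ H] [CompleteSpace H]
    [TopologicalSpace.SeparableSpace H]
    (P : Measure Ω) [IsProbabilityMeasure P] (μ : Measure E) [SigmaFinite μ]
    (N : Ω → Measure E) (hMecke : MeckeSub P μ N) (hN : Measurable N)
    (f : Measure E → E → H) (hf : StronglyMeasurable (Function.uncurry f))
    (hint : Integrable (fun pr : Ω × E => f (N pr.1) pr.2) (P.prod μ)) :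
    (∀ᵐ ω ∂P, Integrable (fun x => f (rmPt (N ω) x) x) (N ω)) ∧
    eLpNorm (fun ω => ∫ x, f (rmPt (N ω) x) x ∂(N ω)) 1 P
      ≤ eLpNorm (fun pr : Ω × E => f (N pr.1) pr.2) 1 (P.prod μ) ∧
    (∫ ω, (∫ x, f (rmPt (N ω) x) x ∂(N ω)) ∂P = ∫ ω, (∫ x, f (N ω) x ∂μ) ∂P) ∧
    (∀ g : Measure E → E → H, StronglyMeasurable (Function.uncurry g) →
      (∀ᵐ pr ∂(P.prod μ), f (N pr.1) pr.2 = g (N pr.1) pr.2) →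
      ∀ᵐ ω ∂P, ∫ x, f (rmPt (N ω) x) x ∂(N ω) = ∫ x, g (rmPt (N ω) x) x ∂(N ω)) := by
  classical
  haveI : Nonempty H := ⟨0⟩
  haveI : SecondCountableTopology H := UniformSpace.secondCountable_of_separable H
  obtain ⟨v, hv⟩ := TopologicalSpace.exists_dense_seq H
  obtain ⟨w, hwm, hw0, hwfin⟩ := mecke_exists_weight μ
  have hNid : Measurable fun pr : Ω × E => (N pr.1, pr.2) :=
    (hN.comp measurable_fst).prodMk measurable_snd
  -- the norm test function
  have hnrmm : Measurable (Function.uncurry fun η x => (‖f η x‖₊ : ℝ≥0∞)) := hf.enorm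
  have hΛprod : ∫⁻ ω, ∫⁻ x, (‖f (N ω) x‖₊ : ℝ≥0∞) ∂μ ∂P
      = ∫⁻ pr : Ω × E, (‖f (N pr.1) pr.2‖₊ : ℝ≥0∞) ∂(P.prod μ) :=
    (lintegral_prod _ ((hnrmm.comp hNid).aemeasurable)).symm
  have hΛfin : ∫⁻ ω, ∫⁻ x, (‖f (N ω) x‖₊ : ℝ≥0∞) ∂μ ∂P ≠ ∞ := by
    rw [hΛprod]; exact hint.2.ne
  obtain ⟨⟨Gn, hGnm, hGnae⟩, hnrm_pω⟩ :=
    mecke_keyFull hMecke hN hwm hw0 hwfin (fun η x => (‖f η x‖₊ : ℝ≥0∞)) hnrmm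
  have hGn_int : ∫⁻ ω, Gn ω ∂P = ∫⁻ ω, ∫⁻ x, (‖f (N ω) x‖₊ : ℝ≥0∞) ∂μ ∂P := by
    rw [← lintegral_congr_ae hGnae]
    exact hMecke (fun η x => (‖f η x‖₊ : ℝ≥0∞)) hnrmm
  have hτfin : ∀ᵐ ω ∂P, ∫⁻ x, (‖f (rmPt (N ω) x) x‖₊ : ℝ≥0∞) ∂(N ω) < ∞ := by
    filter_upwards [hGnae, ae_lt_top hGnm (by rw [hGn_int]; exact hΛfin)] with ω h1 h2
    exact h1 ▸ h2
  -- part (1)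
  have hdstm : ∀ k : ℕ, Measurable (Function.uncurry fun η x => (‖f η x - v k‖₊ : ℝ≥0∞)) :=
    fun k => (hf.sub stronglyMeasurable_const).enorm
  have hdst_pω : ∀ᵐ ω ∂P, ∀ k : ℕ,
      AEMeasurable (fun x => (‖f (rmPt (N ω) x) x - v k‖₊ : ℝ≥0∞)) (N ω) :=
    ae_all_iff.2 fun k =>
      (mecke_keyFull hMecke hN hwm hw0 hwfin (fun η x => (‖f η x - v k‖₊ : ℝ≥0∞)) (hdstm k)).2
  have hTRUTH : ∀ᵐ ω ∂P, AEStronglyMeasurable (fun x => f (rmPt (N ω) x) x) (N ω) := by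
    filter_upwards [hdst_pω] with ω hω
    exact mecke_aesm_of_enorm_dist hv hω
  have h1 : ∀ᵐ ω ∂P, Integrable (fun x => f (rmPt (N ω) x) x) (N ω) := by
    filter_upwards [hTRUTH, hτfin] with ω ha hb
    exact ⟨ha, hb⟩
  -- part (2)
  have h2 : eLpNorm (fun ω => ∫ x, f (rmPt (N ω) x) x ∂(N ω)) 1 P
      ≤ eLpNorm (fun pr : Ω × E => f (N pr.1) pr.2) 1 (P.prod μ) := by
    rw [eLpNorm_one_eq_lintegral_enorm, eLpNorm_one_eq_lintegral_enorm]
    calc ∫⁻ ω, (‖∫ x, f (rmPt (N ω) x) x ∂(N ω)‖₊ : ℝ≥0∞) ∂P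
        ≤ ∫⁻ ω, ∫⁻ x, (‖f (rmPt (N ω) x) x‖₊ : ℝ≥0∞) ∂(N ω) ∂P :=
          lintegral_mono fun ω => enorm_integral_le_lintegral_enorm _
      _ = ∫⁻ ω, ∫⁻ x, (‖f (N ω) x‖₊ : ℝ≥0∞) ∂μ ∂P :=
          hMecke (fun η x => (‖f η x‖₊ : ℝ≥0∞)) hnrmm
      _ = ∫⁻ pr : Ω × E, (‖f (N pr.1) pr.2‖₊ : ℝ≥0∞) ∂(P.prod μ) := hΛprod
  -- part (3)
  have hinner_sm : ∀ k : ℕ,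
      StronglyMeasurable fun pr : Measure E × E => ⟪v k, f pr.1 pr.2⟫ := fun k =>
    stronglyMeasurable_const.inner hf
  have htpm : ∀ k : ℕ,
      Measurable (Function.uncurry fun η x => ENNReal.ofReal ⟪v k, f η x⟫) := fun k =>
    ENNReal.measurable_ofReal.comp (hinner_sm k).measurable
  have htqm : ∀ k : ℕ,
      Measurable (Function.uncurry fun η x => ENNReal.ofReal (-⟪v k, f η x⟫)) := fun k =>
    ENNReal.measurable_ofReal.comp (hinner_sm k).neg.measurable
  have hbound : ∀ (k : ℕ) (η : Measure E) (x : E),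
      ENNReal.ofReal ⟪v k, f η x⟫ ≤ (‖v k‖₊ : ℝ≥0∞) * (‖f η x‖₊ : ℝ≥0∞) := by
    intro k η x
    calc ENNReal.ofReal ⟪v k, f η x⟫ ≤ ENNReal.ofReal (‖v k‖ * ‖f η x‖) :=
          ENNReal.ofReal_le_ofReal
            ((le_abs_self _).trans (abs_real_inner_le_norm _ _))
      _ = (‖v k‖₊ : ℝ≥0∞) * (‖f η x‖₊ : ℝ≥0∞) := by
          rw [ENNReal.ofReal_mul (norm_nonneg _), ofReal_norm, enorm_eq_nnnorm,
            ofReal_norm, enorm_eq_nnnorm]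
  have hbound' : ∀ (k : ℕ) (η : Measure E) (x : E),
      ENNReal.ofReal (-⟪v k, f η x⟫) ≤ (‖v k‖₊ : ℝ≥0∞) * (‖f η x‖₊ : ℝ≥0∞) := by
    intro k η x
    calc ENNReal.ofReal (-⟪v k, f η x⟫) ≤ ENNReal.ofReal (‖v k‖ * ‖f η x‖) :=
          ENNReal.ofReal_le_ofReal
            ((neg_le_abs _).trans (abs_real_inner_le_norm _ _))
      _ = (‖v k‖₊ : ℝ≥0∞) * (‖f η x‖₊ : ℝ≥0∞) := by
          rw [ENNReal.ofReal_mul (norm_nonneg _), ofReal_norm, enorm_eq_nnnorm,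
            ofReal_norm, enorm_eq_nnnorm]
  have hΛbound : ∀ (t : Measure E → E → ℝ≥0∞), Measurable (Function.uncurry t) →
      (∀ η x, t η x ≤ (‖v 0‖₊ : ℝ≥0∞) * (‖f η x‖₊ : ℝ≥0∞)) → True := fun _ _ _ => trivial
  -- finiteness of the coordinate Λ's
  have hΛcoord : ∀ (c : ℝ≥0∞), c ≠ ∞ → ∀ (t : Measure E → E → ℝ≥0∞),
      (∀ η x, t η x ≤ c * (‖f η x‖₊ : ℝ≥0∞)) →
      ∫⁻ ω, ∫⁻ x, t (N ω) x ∂μ ∂P ≠ ∞ := by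
    intro c hc t hle
    have hmono : ∫⁻ ω, ∫⁻ x, t (N ω) x ∂μ ∂P
        ≤ ∫⁻ ω, ∫⁻ x, c * (‖f (N ω) x‖₊ : ℝ≥0∞) ∂μ ∂P :=
      lintegral_mono fun ω => lintegral_mono fun x => hle _ _
    refine ne_top_of_le_ne_top ?_ hmono
    have hstep : ∀ ω, ∫⁻ x, c * (‖f (N ω) x‖₊ : ℝ≥0∞) ∂μ
        = c * ∫⁻ x, (‖f (N ω) x‖₊ : ℝ≥0∞) ∂μ := fun ω =>
      lintegral_const_mul c (hnrmm.comp (measurable_const.prodMk measurable_id))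
    calc ∫⁻ ω, ∫⁻ x, c * (‖f (N ω) x‖₊ : ℝ≥0∞) ∂μ ∂P
        = ∫⁻ ω, c * ∫⁻ x, (‖f (N ω) x‖₊ : ℝ≥0∞) ∂μ ∂P := by
          exact lintegral_congr hstep
      _ = c * ∫⁻ ω, ∫⁻ x, (‖f (N ω) x‖₊ : ℝ≥0∞) ∂μ ∂P :=
          lintegral_const_mul c ((Measurable.lintegral_prod_right hnrmm).comp hN)
      _ ≠ ∞ := ENNReal.mul_ne_top hc hΛfin
  have hkeyp := fun k : ℕ =>
    mecke_keyFull hMecke hN hwm hw0 hwfin (fun η x => ENNReal.ofReal ⟪v k, f η x⟫) (htpm k)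
  have hkeyq := fun k : ℕ =>
    mecke_keyFull hMecke hN hwm hw0 hwfin (fun η x => ENNReal.ofReal (-⟪v k, f η x⟫)) (htqm k)
  choose Gp hGp using fun k : ℕ => (hkeyp k).1
  choose Gq hGq using fun k : ℕ => (hkeyq k).1
  have hΛp : ∀ k, ∫⁻ ω, Gp k ω ∂P = ∫⁻ ω, ∫⁻ x, ENNReal.ofReal ⟪v k, f (N ω) x⟫ ∂μ ∂P := by
    intro k
    rw [← lintegral_congr_ae (hGp k).2]
    exact hMecke _ (htpm k)
  have hΛq : ∀ k, ∫⁻ ω, Gq k ω ∂P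
      = ∫⁻ ω, ∫⁻ x, ENNReal.ofReal (-⟪v k, f (N ω) x⟫) ∂μ ∂P := by
    intro k
    rw [← lintegral_congr_ae (hGq k).2]
    exact hMecke _ (htqm k)
  have hΛpfin : ∀ k, ∫⁻ ω, ∫⁻ x, ENNReal.ofReal ⟪v k, f (N ω) x⟫ ∂μ ∂P ≠ ∞ := fun k =>
    hΛcoord _ ENNReal.coe_ne_top _ (hbound k)
  have hΛqfin : ∀ k, ∫⁻ ω, ∫⁻ x, ENNReal.ofReal (-⟪v k, f (N ω) x⟫) ∂μ ∂P ≠ ∞ := fun k =>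
    hΛcoord _ ENNReal.coe_ne_top _ (hbound' k)
  -- coordinates of the left integrand
  have hLcoordae : ∀ k : ℕ, (fun ω => ⟪v k, ∫ x, f (rmPt (N ω) x) x ∂(N ω)⟫)
      =ᵐ[P] fun ω => (Gp k ω).toReal - (Gq k ω).toReal := by
    intro k
    filter_upwards [h1, (hGp k).2, (hGq k).2] with ω hω hp hq
    have hr : Integrable (fun x => ⟪v k, f (rmPt (N ω) x) x⟫) (N ω) := hω.const_inner _
    have hp' : ∫⁻ x, ENNReal.ofReal ⟪v k, f (rmPt (N ω) x) x⟫ ∂(N ω) = Gp k ω := hp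
    have hq' : ∫⁻ x, ENNReal.ofReal (-⟪v k, f (rmPt (N ω) x) x⟫) ∂(N ω) = Gq k ω := hq
    have e0 : ⟪v k, ∫ x, f (rmPt (N ω) x) x ∂(N ω)⟫
        = ∫ x, ⟪v k, f (rmPt (N ω) x) x⟫ ∂(N ω) := (integral_inner hω (v k)).symm
    have e1 : ∫ x, ⟪v k, f (rmPt (N ω) x) x⟫ ∂(N ω)
        = (∫⁻ x, ENNReal.ofReal ⟪v k, f (rmPt (N ω) x) x⟫ ∂(N ω)).toReal
          - (∫⁻ x, ENNReal.ofReal (-⟪v k, f (rmPt (N ω) x) x⟫) ∂(N ω)).toReal :=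
      integral_eq_lintegral_pos_part_sub_lintegral_neg_part hr
    rw [e0, e1, hp', hq']
  -- measurability and integrability of the left function
  have hL_aesm : AEStronglyMeasurable (fun ω => ∫ x, f (rmPt (N ω) x) x ∂(N ω)) P := by
    refine mecke_aesm_of_inner hv fun k => ?_
    exact (((hGp k).1.ennreal_toReal.sub (hGq k).1.ennreal_toReal).aemeasurable).congr
      (hLcoordae k).symm
  have hL_int : Integrable (fun ω => ∫ x, f (rmPt (N ω) x) x ∂(N ω)) P := by
    refine ⟨hL_aesm, ?_⟩
    calc ∫⁻ ω, (‖∫ x, f (rmPt (N ω) x) x ∂(N ω)‖₊ : ℝ≥0∞) ∂P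
        ≤ ∫⁻ ω, ∫⁻ x, (‖f (rmPt (N ω) x) x‖₊ : ℝ≥0∞) ∂(N ω) ∂P :=
          lintegral_mono fun ω => enorm_integral_le_lintegral_enorm _
      _ = ∫⁻ ω, ∫⁻ x, (‖f (N ω) x‖₊ : ℝ≥0∞) ∂μ ∂P :=
          hMecke (fun η x => (‖f η x‖₊ : ℝ≥0∞)) hnrmm
      _ < ∞ := hΛfin.lt_top
  have hR_int : Integrable (fun ω => ∫ x, f (N ω) x ∂μ) P := hint.integral_prod_left
  -- coordinates of the right integrand
  have hfNint : ∀ᵐ ω ∂P, Integrable (fun x => f (N ω) x) μ := hint.prod_right_ae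
  have hApm : ∀ k : ℕ, Measurable fun ω => ∫⁻ x, ENNReal.ofReal ⟪v k, f (N ω) x⟫ ∂μ :=
    fun k => (Measurable.lintegral_prod_right (htpm k)).comp hN
  have hAqm : ∀ k : ℕ, Measurable fun ω => ∫⁻ x, ENNReal.ofReal (-⟪v k, f (N ω) x⟫) ∂μ :=
    fun k => (Measurable.lintegral_prod_right (htqm k)).comp hN
  have hRcoordae : ∀ k : ℕ, (fun ω => ⟪v k, ∫ x, f (N ω) x ∂μ⟫)
      =ᵐ[P] fun ω => (∫⁻ x, ENNReal.ofReal ⟪v k, f (N ω) x⟫ ∂μ).toReal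
        - (∫⁻ x, ENNReal.ofReal (-⟪v k, f (N ω) x⟫) ∂μ).toReal := by
    intro k
    filter_upwards [hfNint] with ω hω
    have e0 : ⟪v k, ∫ x, f (N ω) x ∂μ⟫ = ∫ x, ⟪v k, f (N ω) x⟫ ∂μ :=
      (integral_inner hω (v k)).symm
    have e1 : ∫ x, ⟪v k, f (N ω) x⟫ ∂μ
        = (∫⁻ x, ENNReal.ofReal ⟪v k, f (N ω) x⟫ ∂μ).toReal
          - (∫⁻ x, ENNReal.ofReal (-⟪v k, f (N ω) x⟫) ∂μ).toReal :=
      integral_eq_lintegral_pos_part_sub_lintegral_neg_part (hω.const_inner _)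
    rw [e0, e1]
  have h3 : ∫ ω, (∫ x, f (rmPt (N ω) x) x ∂(N ω)) ∂P = ∫ ω, (∫ x, f (N ω) x ∂μ) ∂P := by
    refine mecke_eq_of_inner_dense hv fun k => ?_
    rw [← integral_inner hL_int (v k), ← integral_inner hR_int (v k),
      integral_congr_ae (hLcoordae k), integral_congr_ae (hRcoordae k)]
    have hip : Integrable (fun ω => (Gp k ω).toReal) P :=
      integrable_toReal_of_lintegral_ne_top (hGp k).1.aemeasurable
        (by rw [hΛp k]; exact hΛpfin k)
    have hiq : Integrable (fun ω => (Gq k ω).toReal) P :=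
      integrable_toReal_of_lintegral_ne_top (hGq k).1.aemeasurable
        (by rw [hΛq k]; exact hΛqfin k)
    have hip' : Integrable (fun ω => (∫⁻ x, ENNReal.ofReal ⟪v k, f (N ω) x⟫ ∂μ).toReal) P :=
      integrable_toReal_of_lintegral_ne_top (hApm k).aemeasurable (hΛpfin k)
    have hiq' : Integrable
        (fun ω => (∫⁻ x, ENNReal.ofReal (-⟪v k, f (N ω) x⟫) ∂μ).toReal) P :=
      integrable_toReal_of_lintegral_ne_top (hAqm k).aemeasurable (hΛqfin k)
    rw [integral_sub hip hiq, integral_sub hip' hiq']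
    have e1 : ∫ ω, (Gp k ω).toReal ∂P = (∫⁻ ω, Gp k ω ∂P).toReal :=
      integral_toReal (hGp k).1.aemeasurable
        (ae_lt_top (hGp k).1 (by rw [hΛp k]; exact hΛpfin k))
    have e2 : ∫ ω, (Gq k ω).toReal ∂P = (∫⁻ ω, Gq k ω ∂P).toReal :=
      integral_toReal (hGq k).1.aemeasurable
        (ae_lt_top (hGq k).1 (by rw [hΛq k]; exact hΛqfin k))
    have e3 : ∫ ω, (∫⁻ x, ENNReal.ofReal ⟪v k, f (N ω) x⟫ ∂μ).toReal ∂P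
        = (∫⁻ ω, ∫⁻ x, ENNReal.ofReal ⟪v k, f (N ω) x⟫ ∂μ ∂P).toReal :=
      integral_toReal (hApm k).aemeasurable (ae_lt_top (hApm k) (hΛpfin k))
    have e4 : ∫ ω, (∫⁻ x, ENNReal.ofReal (-⟪v k, f (N ω) x⟫) ∂μ).toReal ∂P
        = (∫⁻ ω, ∫⁻ x, ENNReal.ofReal (-⟪v k, f (N ω) x⟫) ∂μ ∂P).toReal :=
      integral_toReal (hAqm k).aemeasurable (ae_lt_top (hAqm k) (hΛqfin k))
    rw [e1, e2, e3, e4, hΛp k, hΛq k]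
  -- part (4)
  have h4 : ∀ g : Measure E → E → H, StronglyMeasurable (Function.uncurry g) →
      (∀ᵐ pr ∂(P.prod μ), f (N pr.1) pr.2 = g (N pr.1) pr.2) →
      ∀ᵐ ω ∂P, ∫ x, f (rmPt (N ω) x) x ∂(N ω) = ∫ x, g (rmPt (N ω) x) x ∂(N ω) := by
    intro g hg hfg
    have hδm : Measurable (Function.uncurry fun η x => (‖f η x - g η x‖₊ : ℝ≥0∞)) :=
      (hf.sub hg).enorm
    obtain ⟨⟨Gδ, hGδm, hGδae⟩, hδae⟩ :=
      mecke_keyFull hMecke hN hwm hw0 hwfin (fun η x => (‖f η x - g η x‖₊ : ℝ≥0∞)) hδm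
    have hΛδ : ∫⁻ ω, ∫⁻ x, (‖f (N ω) x - g (N ω) x‖₊ : ℝ≥0∞) ∂μ ∂P = 0 := by
      have hδprod : ∫⁻ ω, ∫⁻ x, (‖f (N ω) x - g (N ω) x‖₊ : ℝ≥0∞) ∂μ ∂P
          = ∫⁻ pr : Ω × E, (‖f (N pr.1) pr.2 - g (N pr.1) pr.2‖₊ : ℝ≥0∞) ∂(P.prod μ) :=
        (lintegral_prod _ ((hδm.comp hNid).aemeasurable)).symm
      rw [hδprod]
      have hz : (fun pr : Ω × E => (‖f (N pr.1) pr.2 - g (N pr.1) pr.2‖₊ : ℝ≥0∞))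
          =ᵐ[P.prod μ] 0 := by
        filter_upwards [hfg] with pr hpr
        simp [hpr]
      rw [lintegral_congr_ae hz]; simp
    have hGδ0 : Gδ =ᵐ[P] 0 := by
      have hi : ∫⁻ ω, Gδ ω ∂P = 0 := by
        rw [← lintegral_congr_ae hGδae, hMecke _ hδm, hΛδ]
      exact (lintegral_eq_zero_iff hGδm).1 hi
    have hτ0 : ∀ᵐ ω ∂P, ∫⁻ x, (‖f (rmPt (N ω) x) x - g (rmPt (N ω) x) x‖₊ : ℝ≥0∞) ∂(N ω)
        = 0 := by
      filter_upwards [hGδae, hGδ0] with ω ha hb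
      rw [ha, hb]; rfl
    filter_upwards [hτ0, hδae] with ω h0 hmeas
    have hzero : (fun x => (‖f (rmPt (N ω) x) x - g (rmPt (N ω) x) x‖₊ : ℝ≥0∞))
        =ᵐ[N ω] 0 := (lintegral_eq_zero_iff' hmeas).1 h0
    refine integral_congr_ae ?_
    filter_upwards [hzero] with x hx
    have hx' : (‖f (rmPt (N ω) x) x - g (rmPt (N ω) x) x‖₊ : ℝ≥0∞) = 0 := hx
    rw [ENNReal.coe_eq_zero, nnnorm_eq_zero, sub_eq_zero] at hx'
    exact hx'
  exact ⟨h1, h2, h3, h4⟩
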